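/- Let a, d, k be positive integers with gcd(a,d)=1 and 2 ≤ k ≤ a, let a−1 = q(k−1)+r with 0 ≤ r < k−1, and set a_k = a+(k−1)d. Define the polynomial P(x) = 1 + x^{a+d}·(Σ_{j=0}^{k−2} x^{jd})·(Σ_{s=0}^{q−1} x^{s a_k}) + x^{q a_k + a + d}·(Σ_{t=0}^{r−1} x^{td}). Then for every λ ∈ ℂ and every integer ν ≥ 0, Σ_{i=0}^{a−1} λ^{m_i} m_i^{ν} = Σ_{i=0}^{ν} S(ν,i) λ^{i} P^{(i)}(λ), where P^{(i)} denotes the i-th derivative of P and m_i is taken with respect to the sequence a, a+d, …, a+(k−1)d. -/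

import Mathlib

open Finset

/-- `n` is representable as a nonnegative integer combination of the `a i`. -/
def Representable {k : ℕ} (a : Fin k → ℕ) (n : ℕ) : Prop :=
  ∃ x : Fin k → ℕ, n = ∑ i, x i * a i

/-- Stirling numbers of the second kind,
`S(n,m) = (1/m!) Σ_{i=0}^{m} (−1)^i C(m,i)(m−i)^n`, as complex numbers. -/
noncomputable def stirling2 (n m : ℕ) : ℂ :=
  (1 / (m.factorial : ℂ)) *
    ∑ i ∈ Finset.range (m + 1), (-1 : ℂ) ^ i * (m.choose i : ℂ) * ((m - i : ℕ) : ℂ) ^ n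

noncomputable def TT (ν i : ℕ) : ℂ :=
  ∑ j ∈ Finset.range (i + 1), (-1 : ℂ) ^ j * (i.choose j : ℂ) * ((i - j : ℕ) : ℂ) ^ ν

lemma stirling2_eq (ν i : ℕ) : stirling2 ν i = (1 / (i.factorial : ℂ)) * TT ν i := rfl

lemma TT_rec (ν i : ℕ) : TT (ν + 1) (i + 1) = (i + 1) * (TT ν (i + 1) + TT ν i) := by
  have h1 : TT (ν + 1) (i + 1)
      = (i + 1 : ℂ) * ∑ j ∈ Finset.range (i + 2),
          (-1 : ℂ) ^ j * (i.choose j : ℂ) * ((i + 1 - j : ℕ) : ℂ) ^ ν := by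
    rw [TT, Finset.mul_sum]
    apply Finset.sum_congr rfl
    intro j hj
    have hc : (i.choose j : ℂ) * ((i : ℂ) + 1) = ((i + 1).choose j : ℂ) * ((i + 1 - j : ℕ) : ℂ) := by
      exact_mod_cast congrArg (Nat.cast : ℕ → ℂ) (Nat.choose_mul_succ_eq i j)
    rw [pow_succ]
    push_cast
    linear_combination (-(-1 : ℂ) ^ j * ((i + 1 - j : ℕ) : ℂ) ^ ν) * hc
  have h2 : TT ν (i + 1)
      - ∑ j ∈ Finset.range (i + 2), (-1 : ℂ) ^ j * (i.choose j : ℂ) * ((i + 1 - j : ℕ) : ℂ) ^ ν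
      = - TT ν i := by
    rw [TT, TT, ← Finset.sum_sub_distrib, Finset.sum_range_succ', ← Finset.sum_neg_distrib]
    rw [show (i + 1 : ℕ) - 0 = i + 1 from rfl]
    simp only [Nat.choose_zero_right, Nat.succ_sub_succ]
    rw [Finset.sum_congr rfl (fun j hj => ?_)]
    · push_cast; ring
    · have : ((i + 1).choose (j + 1) : ℂ) = (i.choose j : ℂ) + (i.choose (j + 1) : ℂ) := by
        exact_mod_cast congrArg (Nat.cast : ℕ → ℂ) (Nat.choose_succ_succ i j)
      rw [show (-1 : ℂ) ^ (j+1) * ((i + 1).choose (j+1) : ℂ) * ((i - j : ℕ) : ℂ) ^ ν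
          - (-1 : ℂ) ^ (j+1) * (i.choose (j+1) : ℂ) * ((i - j : ℕ) : ℂ) ^ ν
          = -((-1 : ℂ) ^ j * (i.choose j : ℂ) * ((i - j : ℕ) : ℂ) ^ ν) from by
        rw [this]; ring]
  rw [h1]
  push_cast
  linear_combination (-((i : ℂ) + 1)) * h2

lemma TT_vanish : ∀ ν i : ℕ, ν < i → TT ν i = 0 := by
  intro ν
  induction ν with
  | zero =>
    intro i hi
    rw [TT]
    have h := Int.alternating_sum_range_choose_of_ne hi.ne'
    have := congrArg (Int.cast : ℤ → ℂ) h
    push_cast at this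
    simpa using this
  | succ ν ih =>
    intro i hi
    obtain ⟨i, rfl⟩ : ∃ j, i = j + 1 := ⟨i - 1, by omega⟩
    rw [TT_rec, ih (i + 1) (by omega), ih i (by omega)]
    ring

lemma stirling2_zero_succ (ν : ℕ) : stirling2 (ν + 1) 0 = 0 := by
  simp [stirling2]

lemma stirling2_vanish (ν i : ℕ) (h : ν < i) : stirling2 ν i = 0 := by
  rw [stirling2_eq, TT_vanish ν i h, mul_zero]

lemma stirling2_rec (ν i : ℕ) :
    stirling2 (ν + 1) (i + 1) = (i + 1) * stirling2 ν (i + 1) + stirling2 ν i := by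
  rw [stirling2_eq, stirling2_eq, stirling2_eq, TT_rec]
  have h1 : ((i + 1).factorial : ℂ) ≠ 0 := Nat.cast_ne_zero.mpr (Nat.factorial_ne_zero _)
  have h2 : (i.factorial : ℂ) ≠ 0 := Nat.cast_ne_zero.mpr (Nat.factorial_ne_zero _)
  have h3 : ((i + 1).factorial : ℂ) = (i + 1) * (i.factorial : ℂ) := by
    rw [Nat.factorial_succ]; push_cast; ring
  have key : (1 : ℂ) / ((i + 1).factorial : ℂ) * ((i : ℂ) + 1) = 1 / (i.factorial : ℂ) := by
    rw [h3]
    have hi1 : ((i : ℂ) + 1) ≠ 0 := Nat.cast_add_one_ne_zero i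
    field_simp
  linear_combination TT ν i * key

lemma descFact_mul (e i : ℕ) :
    (e : ℂ) * (e.descFactorial i : ℂ) =
      (e.descFactorial (i + 1) : ℂ) + (i : ℂ) * (e.descFactorial i : ℂ) := by
  rcases le_or_gt i e with h | h
  · rw [Nat.descFactorial_succ]
    push_cast [Nat.cast_sub h]
    ring
  · rw [Nat.descFactorial_eq_zero_iff_lt.mpr h,
      Nat.descFactorial_eq_zero_iff_lt.mpr (by omega)]
    push_cast
    ring

lemma stirling_descFact (ν e : ℕ) :
    ∑ i ∈ Finset.range (ν + 1), stirling2 ν i * (e.descFactorial i : ℂ) = (e : ℂ) ^ ν := by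
  induction ν with
  | zero => simp [stirling2]
  | succ ν ih =>
    have step : ∀ i ∈ Finset.range (ν + 1),
        stirling2 (ν + 1) (i + 1) * (e.descFactorial (i + 1) : ℂ)
          = (i + 1) * stirling2 ν (i + 1) * (e.descFactorial (i + 1) : ℂ)
            + stirling2 ν i * (e.descFactorial (i + 1) : ℂ) := by
      intro i _
      rw [stirling2_rec]; ring
    rw [Finset.sum_range_succ', Finset.sum_congr rfl step, Finset.sum_add_distrib,
      stirling2_zero_succ]
    have hshift : ∑ i ∈ Finset.range (ν + 1),
        ((i : ℂ) + 1) * stirling2 ν (i + 1) * (e.descFactorial (i + 1) : ℂ)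
        = ∑ i ∈ Finset.range (ν + 1), (i : ℂ) * stirling2 ν i * (e.descFactorial i : ℂ) := by
      rw [Finset.sum_range_succ, stirling2_vanish ν (ν + 1) (by omega),
        Finset.sum_range_succ']
      push_cast
      simp
    rw [hshift]
    have expand : ∀ i ∈ Finset.range (ν + 1),
        (i : ℂ) * stirling2 ν i * (e.descFactorial i : ℂ)
          + stirling2 ν i * (e.descFactorial (i + 1) : ℂ)
        = (e : ℂ) * (stirling2 ν i * (e.descFactorial i : ℂ)) := by
      intro i _
      have := descFact_mul e i
      linear_combination (-(stirling2 ν i)) * this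
    calc ∑ i ∈ Finset.range (ν + 1),
          ((i : ℂ) * stirling2 ν i * (e.descFactorial i : ℂ)) +
          ∑ i ∈ Finset.range (ν + 1), stirling2 ν i * (e.descFactorial (i + 1) : ℂ) + 0 * ((e.descFactorial 0 : ℕ) : ℂ)
        = ∑ i ∈ Finset.range (ν + 1),
            ((i : ℂ) * stirling2 ν i * (e.descFactorial i : ℂ)
              + stirling2 ν i * (e.descFactorial (i + 1) : ℂ)) := by
          rw [Finset.sum_add_distrib]; ring
      _ = ∑ i ∈ Finset.range (ν + 1), (e : ℂ) * (stirling2 ν i * (e.descFactorial i : ℂ)) :=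
          Finset.sum_congr rfl expand
      _ = (e : ℂ) ^ (ν + 1) := by rw [← Finset.mul_sum, ih, pow_succ]; ring

lemma iterDeriv_sum_pow (s : Finset ℕ) (E : ℕ → ℕ) (i : ℕ) :
    iteratedDeriv i (fun x : ℂ => ∑ j ∈ s, x ^ E j) =
      fun x => ∑ j ∈ s, ((E j).descFactorial i : ℂ) * x ^ (E j - i) := by
  induction i with
  | zero => simp [iteratedDeriv_zero]
  | succ i ih =>
    rw [iteratedDeriv_succ, ih]
    funext x
    rw [deriv_fun_sum (fun j _ => (((differentiable_pow _).const_mul _).differentiableAt))]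
    · apply Finset.sum_congr rfl
      intro j _
      rw [deriv_const_mul _ (differentiable_pow _ |>.differentiableAt), deriv_pow_field]
      rw [Nat.descFactorial_succ]
      push_cast
      rw [Nat.sub_sub]
      ring

lemma mono_term (ν e : ℕ) (lam : ℂ) :
    ∑ i ∈ Finset.range (ν + 1),
        stirling2 ν i * lam ^ i * (((e.descFactorial i : ℕ) : ℂ) * lam ^ (e - i)) =
      lam ^ e * (e : ℂ) ^ ν := by
  have h : ∀ i ∈ Finset.range (ν + 1),
      stirling2 ν i * lam ^ i * (((e.descFactorial i : ℕ) : ℂ) * lam ^ (e - i))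
        = stirling2 ν i * ((e.descFactorial i : ℕ) : ℂ) * lam ^ e := by
    intro i _
    rcases le_or_gt i e with hle | hlt
    · rw [show lam ^ e = lam ^ i * lam ^ (e - i) from by
        rw [← pow_add, Nat.add_sub_cancel' hle]]
      ring
    · rw [Nat.descFactorial_eq_zero_iff_lt.mpr hlt]
      push_cast
      ring
  rw [Finset.sum_congr rfl h]
  have : ∑ i ∈ Finset.range (ν + 1), stirling2 ν i * ((e.descFactorial i : ℕ) : ℂ) * lam ^ e
      = (∑ i ∈ Finset.range (ν + 1), stirling2 ν i * ((e.descFactorial i : ℕ) : ℂ)) * lam ^ e := by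
    rw [Finset.sum_mul]
  rw [this, stirling_descFact]
  ring

lemma ceil_bounds (K i' : ℕ) (hK : 0 < K) (h1 : 1 ≤ i') :
    1 ≤ (i' + K - 1)/K ∧ ((i' + K - 1)/K - 1) * K < i' ∧ i' ≤ ((i' + K - 1)/K) * K := by
  have hdm := Nat.div_add_mod (i' + K - 1) K
  have hlt := Nat.mod_lt (i' + K - 1) hK
  generalize hc : (i' + K - 1)/K = c at hdm ⊢
  rcases Nat.eq_zero_or_pos c with rfl | hpos
  · simp at hdm; omega
  obtain ⟨c', rfl⟩ : ∃ c', c = c' + 1 := ⟨c - 1, by omega⟩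
  have e1 : (c' + 1 - 1) * K = K * c' := by rw [Nat.add_sub_cancel]; exact Nat.mul_comm _ _
  have e2 : (c' + 1) * K = K * c' + K := by ring
  have e3 : K * (c' + 1) = K * c' + K := by ring
  rw [e1, e2]
  rw [e3] at hdm
  omega

lemma ceil_min (K i' M : ℕ) (hK : 0 < K) (h : i' ≤ M * K) : (i' + K - 1)/K ≤ M := by
  rw [Nat.div_le_iff_le_mul_add_pred hK]
  have : K * M = M * K := Nat.mul_comm _ _
  omega

lemma sum_range_mul_comm {M : Type*} [AddCommMonoid M] (g : ℕ → M) (q K : ℕ) :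
    ∑ i ∈ Finset.range (q * K), g i
      = ∑ s ∈ Finset.range q, ∑ j ∈ Finset.range K, g (s * K + j) := by
  induction q with
  | zero => simp
  | succ q ih =>
    have h : (q + 1) * K = q * K + K := by ring
    rw [h, Finset.sum_range_add, ih, Finset.sum_range_succ]

lemma rep_decomp {a d k n : ℕ} (hk : 2 ≤ k)
    (hrep : Representable (fun j : Fin k => a + (j : ℕ) * d) n) :
    ∃ M D : ℕ, n = M * a + D * d ∧ D ≤ M * (k - 1) := by
  obtain ⟨x, hx⟩ := hrep
  refine ⟨∑ j, x j, ∑ j, x j * (j : ℕ), ?_, ?_⟩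
  · rw [hx, Finset.sum_mul, Finset.sum_mul]
    rw [← Finset.sum_add_distrib]
    apply Finset.sum_congr rfl
    intro j _
    ring
  · rw [Finset.sum_mul]
    apply Finset.sum_le_sum
    intro j _
    exact Nat.mul_le_mul_left _ (by omega : (j : ℕ) ≤ k - 1)

lemma least_rep (a d k : ℕ) (ha : 0 < a) (hd : 0 < d) (hk : 2 ≤ k) (hka : k ≤ a)
    (hgcd : Nat.gcd a d = 1) (i' : ℕ) (h1 : 1 ≤ i') (h2 : i' < a) :
    IsLeast {n : ℕ | 0 < n ∧ Representable (fun j : Fin k => a + (j : ℕ) * d) n ∧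
        n % a = (i' * d) % a}
      ((i' + k - 2) / (k - 1) * a + i' * d) := by
  have hK : 0 < k - 1 := by omega
  have hnum : i' + k - 2 = i' + (k - 1) - 1 := by omega
  rw [hnum]
  obtain ⟨hc1, hclt, hcle⟩ := ceil_bounds (k - 1) i' hK h1
  obtain ⟨c, hceq⟩ : ∃ c, (i' + (k - 1) - 1) / (k - 1) = c + 1 :=
    ⟨(i' + (k - 1) - 1) / (k - 1) - 1, by omega⟩
  rw [hceq] at hclt hcle ⊢
  rw [Nat.add_sub_cancel] at hclt
  have hmul : (c + 1) * (k - 1) = c * (k - 1) + (k - 1) := by ring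
  obtain ⟨u, hu1, huK, hiu⟩ : ∃ u, 1 ≤ u ∧ u ≤ k - 1 ∧ i' = c * (k - 1) + u :=
    ⟨i' - c * (k - 1), by omega, by omega, by omega⟩
  constructor
  · refine ⟨by positivity, ?_, ?_⟩
    · -- representable
      have huk : u < k := by omega
      have hKk : k - 1 < k := by omega
      refine ⟨(fun j => (if j = (⟨u, huk⟩ : Fin k) then 1 else 0) +
          (if j = (⟨k - 1, hKk⟩ : Fin k) then c else 0)), ?_⟩
      have hsplit : ∀ j : Fin k,
          ((if j = (⟨u, huk⟩ : Fin k) then 1 else 0) +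
            (if j = (⟨k - 1, hKk⟩ : Fin k) then c else 0)) * (a + (j : ℕ) * d)
          = (if j = (⟨u, huk⟩ : Fin k) then a + u * d else 0) +
            (if j = (⟨k - 1, hKk⟩ : Fin k) then c * (a + (k - 1) * d) else 0) := by
        intro j
        split_ifs with hju hjK hjK
        · have huKeq : u = k - 1 := congrArg Fin.val (hju.symm.trans hjK)
          subst hju
          simp only [Fin.val_mk]
          rw [huKeq]
          ring
        · subst hju; simp
        · subst hjK; simp
        · simp
      rw [Finset.sum_congr rfl (fun j _ => hsplit j), Finset.sum_add_distrib,
        Finset.sum_ite_eq' Finset.univ, Finset.sum_ite_eq' Finset.univ]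
      simp only [Finset.mem_univ, if_true]
      rw [hiu]
      ring
    · -- congruence
      rw [Nat.mul_add_mod']
  · -- lower bound
    rintro n ⟨hn0, hnrep, hnmod⟩
    obtain ⟨M, D, hnMD, hDM⟩ := rep_decomp hk hnrep
    have hDd : D * d % a = i' * d % a := by
      rw [hnMD, Nat.mul_add_mod'] at hnmod
      exact hnmod
    have hDmod : D % a = i' % a :=
      Nat.ModEq.cancel_right_of_coprime hgcd hDd
    have hDge : i' ≤ D := by
      have := Nat.div_add_mod D a
      rw [hDmod, Nat.mod_eq_of_lt h2] at this
      omega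
    have hMc : c + 1 ≤ M := by
      rw [← hceq]
      exact ceil_min (k - 1) i' M hK (le_trans hDge hDM)
    rw [hnMD]
    exact Nat.add_le_add (Nat.mul_le_mul_right a hMc) (Nat.mul_le_mul_right d hDge)

lemma P_expand (a d k q r : ℕ) (ha : 0 < a) (hk : 2 ≤ k)
    (hqr : a - 1 = q * (k - 1) + r) (hr : r < k - 1) (x : ℂ) :
    1 + x ^ (a + d) * (∑ j ∈ Finset.range (k - 1), x ^ (j * d)) *
          (∑ s ∈ Finset.range q, x ^ (s * (a + (k - 1) * d))) +
        x ^ (q * (a + (k - 1) * d) + a + d) * (∑ t ∈ Finset.range r, x ^ (t * d))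
      = ∑ i ∈ Finset.range a, x ^ ((i + k - 2) / (k - 1) * a + i * d) := by
  have hK : 0 < k - 1 := by omega
  set E : ℕ → ℕ := fun i => (i + k - 2) / (k - 1) * a + i * d with hE
  have hE0 : E 0 = 0 := by
    simp only [hE]
    rw [Nat.div_eq_of_lt (by omega)]
    simp
  have hEs : ∀ s j : ℕ, j < k - 1 →
      E (s * (k - 1) + j + 1) = (a + d) + j * d + s * (a + (k - 1) * d) := by
    intro s j hj
    have hnum : s * (k - 1) + j + 1 + k - 2 = (k - 1) * (s + 1) + j := by
      have : (k - 1) * (s + 1) = s * (k - 1) + (k - 1) := by ring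
      omega
    simp only [hE]
    rw [hnum, Nat.mul_add_div hK, Nat.div_eq_of_lt hj]
    ring
  have hEt : ∀ t : ℕ, t < k - 1 →
      E (q * (k - 1) + t + 1) = q * (a + (k - 1) * d) + a + d + t * d := by
    intro t ht
    have hnum : q * (k - 1) + t + 1 + k - 2 = (k - 1) * (q + 1) + t := by
      have : (k - 1) * (q + 1) = q * (k - 1) + (k - 1) := by ring
      omega
    simp only [hE]
    rw [hnum, Nat.mul_add_div hK, Nat.div_eq_of_lt ht]
    ring
  show _ = ∑ i ∈ Finset.range a, x ^ E i
  have hrange : Finset.range a = Finset.range ((q * (k - 1) + r) + 1) := by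
    congr 1; omega
  rw [hrange, Finset.sum_range_succ', hE0, pow_zero, Finset.sum_range_add,
    sum_range_mul_comm (fun i => x ^ E (i + 1)) q (k - 1)]
  have h1 : ∑ s ∈ Finset.range q, ∑ j ∈ Finset.range (k - 1), x ^ E (s * (k - 1) + j + 1)
      = x ^ (a + d) * (∑ j ∈ Finset.range (k - 1), x ^ (j * d)) *
          (∑ s ∈ Finset.range q, x ^ (s * (a + (k - 1) * d))) := by
    rw [Finset.mul_sum]
    apply Finset.sum_congr rfl; intro s _
    rw [Finset.mul_sum, Finset.sum_mul]
    apply Finset.sum_congr rfl; intro j hj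
    rw [hEs s j (Finset.mem_range.mp hj), pow_add, pow_add]
  have h2 : ∑ t ∈ Finset.range r, x ^ E (q * (k - 1) + t + 1)
      = x ^ (q * (a + (k - 1) * d) + a + d) * (∑ t ∈ Finset.range r, x ^ (t * d)) := by
    rw [Finset.mul_sum]
    apply Finset.sum_congr rfl; intro t ht
    have ht' := Finset.mem_range.mp ht
    rw [hEt t (by omega), pow_add, ← pow_add]
  rw [h1, h2]
  ring

/-- Weighted power sums of the minimal representatives via derivatives of the
polynomial `P`. -/
theorem stmt12 (a d k q r : ℕ) (ha : 0 < a) (hd : 0 < d)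
    (hk : 2 ≤ k) (hka : k ≤ a) (hgcd : Nat.gcd a d = 1)
    (hqr : a - 1 = q * (k - 1) + r) (hr : r < k - 1)
    (m : ℕ → ℕ) (hm0 : m 0 = 0)
    (hm : ∀ i ∈ Finset.Icc 1 (a - 1),
      IsLeast {n : ℕ | 0 < n ∧
        Representable (fun j : Fin k => a + (j : ℕ) * d) n ∧ n % a = i} (m i))
    (P : ℂ → ℂ)
    (hP : P = fun x => 1 +
        x ^ (a + d) * (∑ j ∈ Finset.range (k - 1), x ^ (j * d)) *
          (∑ s ∈ Finset.range q, x ^ (s * (a + (k - 1) * d))) +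
        x ^ (q * (a + (k - 1) * d) + a + d) * (∑ t ∈ Finset.range r, x ^ (t * d)))
    (lam : ℂ) (ν : ℕ) :
    ∑ i ∈ Finset.range a, lam ^ (m i) * (m i : ℂ) ^ ν =
      ∑ i ∈ Finset.range (ν + 1), stirling2 ν i * lam ^ i * iteratedDeriv i P lam := by
  have hK : 0 < k - 1 := by omega
  set E : ℕ → ℕ := fun i => (i + k - 2) / (k - 1) * a + i * d with hE
  have hE0 : E 0 = 0 := by
    simp only [hE]
    rw [Nat.div_eq_of_lt (by omega)]
    simp
  -- rewrite P as a sum of monomials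
  have hPsum : P = fun x : ℂ => ∑ i ∈ Finset.range a, x ^ E i := by
    rw [hP]
    funext x
    exact P_expand a d k q r ha hk hqr hr x
  -- RHS computation
  have hRHS : ∑ i ∈ Finset.range (ν + 1), stirling2 ν i * lam ^ i * iteratedDeriv i P lam
      = ∑ j ∈ Finset.range a, lam ^ E j * ((E j : ℕ) : ℂ) ^ ν := by
    rw [hPsum]
    simp only [iterDeriv_sum_pow]
    have hsw : ∀ i ∈ Finset.range (ν + 1),
        stirling2 ν i * lam ^ i *
            (∑ j ∈ Finset.range a, (((E j).descFactorial i : ℕ) : ℂ) * lam ^ (E j - i))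
          = ∑ j ∈ Finset.range a,
              stirling2 ν i * lam ^ i * ((((E j).descFactorial i : ℕ) : ℂ) * lam ^ (E j - i)) := by
      intro i _
      rw [Finset.mul_sum]
    rw [Finset.sum_congr rfl hsw, Finset.sum_comm]
    apply Finset.sum_congr rfl
    intro j _
    exact mono_term ν (E j) lam
  rw [hRHS]
  -- LHS computation
  have hIcc : Finset.Icc 1 (a - 1) = Finset.Ico 1 a := by
    rw [← Finset.Ico_add_one_right_eq_Icc]
    congr 1
    omega
  have hmem : ∀ i' ∈ Finset.Ico 1 a, (i' * d) % a ∈ Finset.Ico 1 a := by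
    intro i' hi'
    rw [Finset.mem_Ico] at hi' ⊢
    refine ⟨?_, Nat.mod_lt _ ha⟩
    by_contra h
    have h0 : (i' * d) % a = 0 := by omega
    have hdvd : a ∣ i' * d := Nat.dvd_of_mod_eq_zero h0
    have : a ∣ i' := (Nat.Coprime.dvd_of_dvd_mul_right hgcd hdvd)
    have := Nat.le_of_dvd (by omega) this
    omega
  have hinj : ∀ i1 ∈ Finset.Ico 1 a, ∀ i2 ∈ Finset.Ico 1 a,
      (i1 * d) % a = (i2 * d) % a → i1 = i2 := by
    intro i1 h1 i2 h2 h
    rw [Finset.mem_Ico] at h1 h2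
    have : i1 % a = i2 % a :=
      Nat.ModEq.cancel_right_of_coprime hgcd (h : i1 * d ≡ i2 * d [MOD a])
    rwa [Nat.mod_eq_of_lt h1.2, Nat.mod_eq_of_lt h2.2] at this
  have himg : Finset.image (fun i' => (i' * d) % a) (Finset.Ico 1 a) = Finset.Ico 1 a := by
    apply Finset.eq_of_subset_of_card_le
    · intro x hx
      rw [Finset.mem_image] at hx
      obtain ⟨i', hi', rfl⟩ := hx
      exact hmem i' hi'
    · rw [Finset.card_image_of_injOn (fun x hx y hy h => hinj x hx y hy h)]
  have hmE : ∀ i' ∈ Finset.Ico 1 a, m ((i' * d) % a) = E i' := by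
    intro i' hi'
    rw [Finset.mem_Ico] at hi'
    have hleast := hm ((i' * d) % a) (by rw [hIcc]; exact hmem i' (Finset.mem_Ico.mpr hi'))
    exact hleast.unique (least_rep a d k ha hd hk hka hgcd i' hi'.1 hi'.2)
  have hbot : ∀ G : ℕ → ℂ, ∑ i ∈ Finset.range a, G i = G 0 + ∑ i ∈ Finset.Ico 1 a, G i := by
    intro G
    rw [Finset.range_eq_Ico, Finset.sum_eq_sum_Ico_succ_bot ha]
  rw [hbot (fun i => lam ^ (m i) * ((m i : ℕ) : ℂ) ^ ν),
    hbot (fun j => lam ^ E j * ((E j : ℕ) : ℂ) ^ ν)]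
  rw [hm0, hE0]
  congr 1
  conv_lhs => rw [← himg]
  rw [Finset.sum_image hinj]
  apply Finset.sum_congr rfl
  intro i' hi'
  rw [hmE i' hi']
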